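/- Let ε₁,…,ε_K ∈ ℝᵐ be vectors indexed by m-subsets F of {1,…,M}, i.e. for each m-subset F we have a vector ε_F ∈ ℝ^M whose coordinates outside F are zero. Then the ℓ₂-norm of the average satisfies ‖(1/C(M,m)) ∑_F ε_F‖₂ ≤ √(m/M) · √((1/C(M,m)) ∑_F ‖ε_F‖₂²), where the sums are over all m-subsets F of {1,…,M}. -/

import Mathlib

open Finset

lemma count_subsets_containing (M m : ℕ) (hm : 1 ≤ m) (j : Fin M) :
    ((Finset.powersetCard m (Finset.univ : Finset (Fin M))).filter (fun F => j ∈ F)).card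
      = (M - 1).choose (m - 1) := by
  have : ((Finset.powersetCard m (Finset.univ : Finset (Fin M))).filter (fun F => j ∈ F)).card
      = (Finset.powersetCard (m - 1) ((Finset.univ : Finset (Fin M)).erase j)).card := by
    apply Finset.card_bij (fun F _ => F.erase j)
    · rintro F hF
      simp only [mem_filter, mem_powersetCard] at hF
      obtain ⟨⟨_, hcard⟩, hj⟩ := hF
      simp only [mem_powersetCard]
      constructor
      · intro x hx
        simp only [mem_erase] at hx ⊢
        exact ⟨hx.1, mem_univ _⟩
      · rw [Finset.card_erase_of_mem hj, hcard]
    · rintro F hF G hG h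
      simp only [mem_filter] at hF hG
      rw [← Finset.insert_erase hF.2, ← Finset.insert_erase hG.2, h]
    · rintro G hG
      simp only [mem_powersetCard] at hG
      refine ⟨insert j G, ?_, ?_⟩
      · simp only [mem_filter, mem_powersetCard]
        have hjG : j ∉ G := fun h => by simpa using hG.1 h
        refine ⟨⟨subset_univ _, ?_⟩, mem_insert_self _ _⟩
        rw [Finset.card_insert_of_notMem hjG, hG.2]
        omega
      · have hjG : j ∉ G := fun h => by simpa using hG.1 h
        rw [Finset.erase_insert hjG]
  rw [this, Finset.card_powersetCard, Finset.card_erase_of_mem (mem_univ j), Finset.card_univ,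
    Fintype.card_fin]

/-- The ℓ₂-norm of the average of vectors ε_F ∈ ℝ^M, each supported on its
m-subset F of {1,…,M}, is at most √(m/M) times the root-mean-square of their norms. -/
theorem average_supported_vectors_norm_bound (M m : ℕ) (hm : 1 ≤ m) (hmM : m ≤ M)
    (ε : Finset (Fin M) → EuclideanSpace ℝ (Fin M))
    (hsupp : ∀ F ∈ Finset.powersetCard m (Finset.univ : Finset (Fin M)),
      ∀ j : Fin M, j ∉ F → ε F j = 0) :
    ‖((M.choose m : ℝ))⁻¹ • ∑ F ∈ Finset.powersetCard m (Finset.univ : Finset (Fin M)), ε F‖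
      ≤ Real.sqrt ((m : ℝ) / M) *
        Real.sqrt (((M.choose m : ℝ))⁻¹ *
          ∑ F ∈ Finset.powersetCard m (Finset.univ : Finset (Fin M)), ‖ε F‖ ^ 2) := by
  set P := Finset.powersetCard m (Finset.univ : Finset (Fin M)) with hP
  have hM : 1 ≤ M := le_trans hm hmM
  have hK : (0 : ℝ) < (M.choose m : ℝ) := by
    exact_mod_cast Nat.choose_pos hmM
  set K : ℝ := (M.choose m : ℝ)
  set L : ℝ := ((M - 1).choose (m - 1) : ℝ)
  have hL0 : (0 : ℝ) ≤ L := Nat.cast_nonneg _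
  -- key identity: M * L = m * K
  have hid : (M : ℝ) * L = (m : ℝ) * K := by
    have := Nat.add_one_mul_choose_eq (M - 1) (m - 1)
    have h1 : M - 1 + 1 = M := by omega
    have h2 : m - 1 + 1 = m := by omega
    rw [h1, h2] at this
    simp only [K, L]
    exact_mod_cast (this.trans (mul_comm _ _))
  -- sum of squares is nonneg
  have hS0 : (0 : ℝ) ≤ ∑ F ∈ P, ‖ε F‖ ^ 2 :=
    Finset.sum_nonneg fun _ _ => sq_nonneg _
  -- key squared inequality
  have key : ‖∑ F ∈ P, ε F‖ ^ 2 ≤ L * ∑ F ∈ P, ‖ε F‖ ^ 2 := by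
    have hnorm : ‖∑ F ∈ P, ε F‖ ^ 2 = ∑ j : Fin M, (∑ F ∈ P, ε F j) ^ 2 := by
      rw [EuclideanSpace.norm_eq, Real.sq_sqrt (Finset.sum_nonneg fun _ _ => sq_nonneg _)]
      congr 1
      ext j
      rw [Real.norm_eq_abs, sq_abs]
      congr 1
      simp [Finset.sum_apply]
    rw [hnorm]
    have step : ∀ j : Fin M, (∑ F ∈ P, ε F j) ^ 2 ≤ L * ∑ F ∈ P, (ε F j) ^ 2 := by
      intro j
      have heq : ∑ F ∈ P, ε F j = ∑ F ∈ P, (if j ∈ F then (1 : ℝ) else 0) * ε F j := by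
        apply Finset.sum_congr rfl
        intro F hF
        by_cases h : j ∈ F
        · simp [h]
        · simp [h, hsupp F hF j h]
      rw [heq]
      calc (∑ F ∈ P, (if j ∈ F then (1 : ℝ) else 0) * ε F j) ^ 2
          ≤ (∑ F ∈ P, (if j ∈ F then (1 : ℝ) else 0) ^ 2) * ∑ F ∈ P, (ε F j) ^ 2 :=
            Finset.sum_mul_sq_le_sq_mul_sq _ _ _
        _ = L * ∑ F ∈ P, (ε F j) ^ 2 := by
            congr 1
            have : ∑ F ∈ P, (if j ∈ F then (1 : ℝ) else 0) ^ 2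
                = ∑ F ∈ P, (if j ∈ F then (1 : ℝ) else 0) := by
              apply Finset.sum_congr rfl; intro F _; split <;> simp
            rw [this, Finset.sum_boole]
            simp only [L, ← count_subsets_containing M m hm j, hP]
    calc ∑ j : Fin M, (∑ F ∈ P, ε F j) ^ 2
        ≤ ∑ j : Fin M, L * ∑ F ∈ P, (ε F j) ^ 2 := Finset.sum_le_sum fun j _ => step j
      _ = L * ∑ F ∈ P, ∑ j : Fin M, (ε F j) ^ 2 := by rw [← Finset.mul_sum, Finset.sum_comm]
      _ = L * ∑ F ∈ P, ‖ε F‖ ^ 2 := by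
          congr 1
          apply Finset.sum_congr rfl
          intro F _
          rw [EuclideanSpace.norm_eq, Real.sq_sqrt (Finset.sum_nonneg fun _ _ => sq_nonneg _)]
          simp [sq_abs]
    -- end key
  -- now conclude
  have hfin : ‖(K)⁻¹ • ∑ F ∈ P, ε F‖ ^ 2 ≤ ((m : ℝ) / M) * ((K)⁻¹ * ∑ F ∈ P, ‖ε F‖ ^ 2) := by
    rw [norm_smul, mul_pow, norm_inv, Real.norm_eq_abs, abs_of_pos hK]
    have hMpos : (0 : ℝ) < (M : ℝ) := by exact_mod_cast hM
    have hLeq : L = (m : ℝ) * K / M := by field_simp; linarith [hid]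
    rw [hLeq] at key
    calc (K⁻¹) ^ 2 * ‖∑ F ∈ P, ε F‖ ^ 2
        ≤ (K⁻¹) ^ 2 * ((m : ℝ) * K / M * ∑ F ∈ P, ‖ε F‖ ^ 2) := by
          apply mul_le_mul_of_nonneg_left key (by positivity)
      _ = ((m : ℝ) / M) * ((K)⁻¹ * ∑ F ∈ P, ‖ε F‖ ^ 2) := by
          field_simp
  have h1 : ‖(K)⁻¹ • ∑ F ∈ P, ε F‖ = Real.sqrt (‖(K)⁻¹ • ∑ F ∈ P, ε F‖ ^ 2) := by
    rw [Real.sqrt_sq (norm_nonneg _)]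
  rw [h1, ← Real.sqrt_mul (by positivity)]
  exact Real.sqrt_le_sqrt hfin
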